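/- Uniqueness in the Knop–Sahi characterization: if f ∈ Q(κ)[x,y] is a symmetric polynomial of degree ≤ |λ| satisfying f(μ1-κ-1, μ2) = 0 for all partitions μ with |μ| ≤ |λ| and μ ≠ λ, and f(λ1-κ-1, λ2) = H_λ(κ), then f = P^κ_λ. -/

import Mathlib

open MvPolynomial

noncomputable def ffF (a : RatFunc ℚ) (n : ℕ) : RatFunc ℚ :=
  ∏ i ∈ Finset.range n, (a - (i : RatFunc ℚ))

noncomputable def ffX (v : Fin 2) (n : ℕ) : MvPolynomial (Fin 2) (RatFunc ℚ) :=
  ∏ i ∈ Finset.range n, (X v - C (i : RatFunc ℚ))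

/-- The two-variable Knop–Sahi polynomial `P^κ_λ` over `ℚ(κ)`, with `κ = RatFunc.X`. -/
noncomputable def KS (l1 l2 : ℕ) : MvPolynomial (Fin 2) (RatFunc ℚ) :=
  ∑ i ∈ Finset.range (l1 - l2 + 1), ∑ j ∈ Finset.range (l1 - l2 + 1 - i),
    C (((l1 - l2).factorial : RatFunc ℚ) * ffF (RatFunc.X + 1) (l1 - l2 - i) *
          ffF (RatFunc.X + 1) (l1 - l2 - j) /
        ((i.factorial : RatFunc ℚ) * (j.factorial : RatFunc ℚ) *
          ((l1 - l2 - i - j).factorial : RatFunc ℚ) * ffF (RatFunc.X + 1) (l1 - l2))) *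
      ffX 0 (l2 + i) * ffX 1 (l2 + j)


abbrev K := RatFunc ℚ


lemma ffF_def (a : K) (n : ℕ) : ffF a n = ∏ i ∈ Finset.range n, (a - (i : K)) := rfl

lemma ffF_zero (a : K) : ffF a 0 = 1 := by simp [ffF]

lemma ffF_succ (a : K) (n : ℕ) : ffF a (n + 1) = ffF a n * (a - n) := by
  simp [ffF, Finset.prod_range_succ]

lemma ffF_add_eq (a : K) (m n : ℕ) : ffF a (m + n) = ffF a m * ffF (a - m) n := by
  rw [ffF_def, Finset.prod_range_add, ← ffF_def]
  congr 1
  rw [ffF_def]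
  refine Finset.prod_congr rfl fun i _ => ?_
  push_cast
  ring

lemma ffF_natCast (c n : ℕ) : ffF (c : K) n = (c.descFactorial n : K) := by
  by_cases h : n ≤ c
  · rw [Nat.descFactorial_eq_prod_range, Nat.cast_prod, ffF_def]
    refine Finset.prod_congr rfl fun i hi => ?_
    rw [Nat.cast_sub (le_of_lt (lt_of_lt_of_le (Finset.mem_range.1 hi) h))]
  · push_neg at h
    rw [Nat.descFactorial_eq_zero_iff_lt.2 h, Nat.cast_zero, ffF_def]
    exact Finset.prod_eq_zero (Finset.mem_range.2 h) (by simp)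

lemma ffF_eq_smeval (a : K) (n : ℕ) : ffF a n = (descPochhammer ℤ n).smeval a := by
  induction n with
  | zero => simp [ffF_zero, descPochhammer_zero, Polynomial.smeval_one]
  | succ n ih =>
    rw [ffF_succ, ih, descPochhammer_succ_right, Polynomial.smeval_mul,
      Polynomial.smeval_sub, Polynomial.smeval_X, Polynomial.smeval_natCast]
    simp

lemma ffF_vandermonde (u v : K) (m : ℕ) :
    ffF (u + v) m = ∑ j ∈ Finset.range (m + 1),
      (m.choose j : K) * (ffF u j * ffF v (m - j)) := by
  rw [ffF_eq_smeval, Ring.descPochhammer_smeval_add m (Commute.all u v),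
    Finset.Nat.sum_antidiagonal_eq_sum_range_succ_mk]
  exact Finset.sum_congr rfl fun j _ => by rw [← ffF_eq_smeval, ← ffF_eq_smeval]

lemma X_sub_C_ne (q : ℚ) : RatFunc.X - RatFunc.C q ≠ 0 := by
  rw [sub_ne_zero]
  intro h
  have := congrArg RatFunc.num h
  rw [RatFunc.num_X, RatFunc.num_C] at this
  exact Polynomial.X_ne_C q this

lemma natCast_eq_C (m : ℕ) : ((m : K)) = RatFunc.C (m : ℚ) := by
  rw [map_natCast]

lemma P_ne (n : ℕ) : ffF (RatFunc.X + 1) n ≠ 0 := by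
  rw [ffF_def]
  refine Finset.prod_ne_zero_iff.2 fun i _ => ?_
  have : RatFunc.X + 1 - (i : K) = RatFunc.X - RatFunc.C ((i : ℚ) - 1) := by
    rw [map_sub, map_one, ← natCast_eq_C]; ring
  rw [this]
  exact X_sub_C_ne _

lemma point_ne (m : ℕ) : (m : K) - RatFunc.X - 1 ≠ 0 := by
  have : (m : K) - RatFunc.X - 1 = -(RatFunc.X - RatFunc.C ((m : ℚ) - 1)) := by
    rw [map_sub, map_one, ← natCast_eq_C]; ring
  rw [this, neg_ne_zero]
  exact X_sub_C_ne _

lemma ffF_reflect (c x : K) (b : ℕ) :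
    ffF (c - x) b = (-1) ^ b * ffF (x - c + b - 1) b := by
  rw [ffF_def, ffF_def, ← Finset.prod_range_reflect fun j => (x - c + (b:K) - 1 - (j:K))]
  rw [show ((-1 : K)) ^ b = ∏ _j ∈ Finset.range b, (-1 : K) by simp, ← Finset.prod_mul_distrib]
  refine Finset.prod_congr rfl fun j hj => ?_
  have hj' : j < b := Finset.mem_range.1 hj
  have : ((b - 1 - j : ℕ) : K) = (b : K) - 1 - (j : K) := by
    have : b - 1 - j = b - (1 + j) := by omega
    rw [this, Nat.cast_sub (by omega)]
    push_cast; ring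
  rw [this]
  ring

lemma sum_range_eq_of_eventually (f : ℕ → K) (M N : ℕ) (h : ∀ j, min M N ≤ j → f j = 0) :
    ∑ j ∈ Finset.range M, f j = ∑ j ∈ Finset.range N, f j := by
  have h1 : ∀ A : ℕ, min M N ≤ A → ∑ j ∈ Finset.range A, f j = ∑ j ∈ Finset.range (min M N), f j :=
    fun A hA => (Finset.sum_subset (Finset.range_subset_range.2 hA)
      (fun x _ hx' => h x (le_of_not_gt (fun hc => hx' (Finset.mem_range.2 hc))))).symm
  rw [h1 M (min_le_left _ _), h1 N (min_le_right _ _)]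

instance : CharZero K := charZero_of_injective_algebraMap (algebraMap ℚ (RatFunc ℚ)).injective

lemma fact_ne (m : ℕ) : ((m.factorial : K)) ≠ 0 :=
  Nat.cast_ne_zero.2 m.factorial_ne_zero

lemma W_eval (n a s : ℕ) (hs : s ≤ a) (han : a ≤ n) :
    ∑ i ∈ Finset.range (n + 1),
      ((n.choose i * i.descFactorial s : ℕ) : K) *
        (ffF ((a : K) - RatFunc.X - 1) i * ffF (RatFunc.X + 1) (n - i)) =
    (n.descFactorial s : K) * ffF ((a : K) - RatFunc.X - 1) s *
      ((a - s).descFactorial (n - s) : K) := by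
  set y : K := (a : K) - RatFunc.X - 1 with hy
  have hsn : s ≤ n := le_trans hs han
  rw [show n + 1 = s + (n + 1 - s) by omega, Finset.sum_range_add]
  have h1 : ∑ i ∈ Finset.range s,
      ((n.choose i * i.descFactorial s : ℕ) : K) * (ffF y i * ffF (RatFunc.X + 1) (n - i)) = 0 := by
    refine Finset.sum_eq_zero fun i hi => ?_
    rw [Nat.descFactorial_eq_zero_iff_lt.2 (Finset.mem_range.1 hi), Nat.mul_zero,
      Nat.cast_zero, zero_mul]
  rw [h1, zero_add]
  have h2 : ∀ k, n.choose (s + k) * (s + k).descFactorial s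
      = n.descFactorial s * (n - s).choose k := by
    intro k
    by_cases hsk : s + k ≤ n
    · rw [Nat.descFactorial_eq_factorial_mul_choose, Nat.descFactorial_eq_factorial_mul_choose]
      have hcm := Nat.choose_mul (n := n) (Nat.le_add_right s k)
      rw [Nat.add_sub_cancel_left] at hcm
      calc n.choose (s + k) * (s.factorial * (s + k).choose s)
          = s.factorial * (n.choose (s + k) * (s + k).choose s) := by ring
        _ = s.factorial * (n.choose s * (n - s).choose k) := by rw [hcm]
        _ = s.factorial * n.choose s * (n - s).choose k := by ring
    · rw [Nat.choose_eq_zero_of_lt (by omega), Nat.choose_eq_zero_of_lt (by omega)]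
      simp
  calc ∑ k ∈ Finset.range (n + 1 - s),
        ((n.choose (s + k) * (s + k).descFactorial s : ℕ) : K) *
          (ffF y (s + k) * ffF (RatFunc.X + 1) (n - (s + k)))
      = ((n.descFactorial s : K) * ffF y s) * ∑ k ∈ Finset.range ((n - s) + 1),
          ((n - s).choose k : K) *
            (ffF (y - (s : K)) k * ffF (RatFunc.X + 1) ((n - s) - k)) := by
        rw [Finset.mul_sum, show n + 1 - s = (n - s) + 1 by omega]
        refine Finset.sum_congr rfl fun k hk => ?_
        rw [h2 k, ffF_add_eq y s k, show n - (s + k) = (n - s) - k by omega]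
        push_cast
        ring
    _ = (n.descFactorial s : K) * ffF y s * ((a - s).descFactorial (n - s) : K) := by
        rw [← ffF_vandermonde (y - (s : K)) (RatFunc.X + 1) (n - s)]
        have : y - (s : K) + (RatFunc.X + 1) = ((a - s : ℕ) : K) := by
          rw [hy, Nat.cast_sub hs]; ring
        rw [this, ffF_natCast, mul_assoc]

lemma main_identity (n a b : ℕ) (hba : b ≤ a) (hab : a + b ≤ n) :
    (∑ i ∈ Finset.range (n + 1), ∑ j ∈ Finset.range (n + 1 - i),
      ((n.factorial : K) * ffF (RatFunc.X + 1) (n - i) * ffF (RatFunc.X + 1) (n - j) /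
        ((i.factorial : K) * (j.factorial : K) * ((n - i - j).factorial : K) *
          ffF (RatFunc.X + 1) n)) *
        ffF ((a : K) - RatFunc.X - 1) i * ffF (b : K) j) =
    if a = n ∧ b = 0 then (n.factorial : K) else 0 := by
  set y : K := (a : K) - RatFunc.X - 1 with hy
  have hbn : b ≤ n := by omega
  have han : a ≤ n := by omega
  have step12 : ∀ i, i ≤ n →
      ∑ j ∈ Finset.range (n + 1 - i),
        ((n.factorial : K) * ffF (RatFunc.X + 1) (n - i) * ffF (RatFunc.X + 1) (n - j) /
          ((i.factorial : K) * (j.factorial : K) * ((n - i - j).factorial : K) *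
            ffF (RatFunc.X + 1) n)) * ffF y i * ffF (b : K) j
      = ((n.choose i : K) * ffF y i * ffF (RatFunc.X + 1) (n - i) / ffF (RatFunc.X + 1) n) *
          (ffF (RatFunc.X + 1) (n - b) * ffF (RatFunc.X + 1 + (b : K) - (i : K)) b) := by
    intro i hi
    have e1 : ∑ j ∈ Finset.range (n + 1 - i),
        ((n.factorial : K) * ffF (RatFunc.X + 1) (n - i) * ffF (RatFunc.X + 1) (n - j) /
          ((i.factorial : K) * (j.factorial : K) * ((n - i - j).factorial : K) *
            ffF (RatFunc.X + 1) n)) * ffF y i * ffF (b : K) j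
        = ((n.choose i : K) * ffF y i * ffF (RatFunc.X + 1) (n - i) / ffF (RatFunc.X + 1) n) *
          ∑ j ∈ Finset.range (n + 1 - i),
            (((n - i).choose j * b.descFactorial j : ℕ) : K) * ffF (RatFunc.X + 1) (n - j) := by
      rw [Finset.mul_sum]
      refine Finset.sum_congr rfl fun j hj => ?_
      have hj' : j ≤ n - i := by have := Finset.mem_range.1 hj; omega
      have hfact : n.choose i * ((n - i).choose j) *
          (i.factorial * j.factorial * (n - i - j).factorial) = n.factorial := by
        have h1 := Nat.choose_mul_factorial_mul_factorial hi
        have h2 := Nat.choose_mul_factorial_mul_factorial hj'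
        rw [← h1, ← h2]
        ring
      have key : (n.factorial : K) = (n.choose i : K) * ((n - i).choose j : K) *
          ((i.factorial : K) * (j.factorial : K) * ((n - i - j).factorial : K)) := by
        rw [← hfact]; push_cast; ring
      have hfi : (i.factorial : K) ≠ 0 := fact_ne i
      have hfj : (j.factorial : K) ≠ 0 := fact_ne j
      have hfk : ((n - i - j).factorial : K) ≠ 0 := fact_ne _
      have hPn : ffF (RatFunc.X + 1) n ≠ 0 := P_ne n
      rw [ffF_natCast, key]
      push_cast
      field_simp
    rw [e1]
    congr 1
    have e2 : (∑ j ∈ Finset.range (n + 1 - i),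
        (((n - i).choose j * b.descFactorial j : ℕ) : K) * ffF (RatFunc.X + 1) (n - j)) =
        ∑ j ∈ Finset.range (n + 1 - i),
        ((b.choose j * (n - i).descFactorial j : ℕ) : K) * ffF (RatFunc.X + 1) (n - j) := by
      refine Finset.sum_congr rfl fun j _ => ?_
      congr 2
      rw [Nat.descFactorial_eq_factorial_mul_choose, Nat.descFactorial_eq_factorial_mul_choose]
      ring
    rw [e2, sum_range_eq_of_eventually _ (n + 1 - i) (b + 1) (by
      intro j hj
      rcases min_le_iff.1 hj with h | h
      · rw [Nat.descFactorial_eq_zero_iff_lt.2 (by omega), Nat.mul_zero, Nat.cast_zero, zero_mul]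
      · rw [Nat.choose_eq_zero_of_lt (by omega), Nat.zero_mul, Nat.cast_zero, zero_mul])]
    have e3 : ∀ j ∈ Finset.range (b + 1), ((b.choose j * (n - i).descFactorial j : ℕ) : K) *
        ffF (RatFunc.X + 1) (n - j) = ((b.choose j : K) *
          (ffF (((n - i : ℕ)) : K) j * ffF ((RatFunc.X + 1) - ((n - b : ℕ) : K)) (b - j))) *
          ffF (RatFunc.X + 1) (n - b) := by
      intro j hj
      have hjb : j ≤ b := by have := Finset.mem_range.1 hj; omega
      have hsplit : ffF (RatFunc.X + 1) (n - j)
          = ffF (RatFunc.X + 1) (n - b) * ffF ((RatFunc.X + 1) - ((n - b : ℕ) : K)) (b - j) := by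
        rw [← ffF_add_eq, show (n - b) + (b - j) = n - j by omega]
      rw [hsplit, ffF_natCast]
      push_cast
      ring
    rw [Finset.sum_congr rfl e3, ← Finset.sum_mul, ← ffF_vandermonde]
    have harg : ((n - i : ℕ) : K) + (RatFunc.X + 1 - ((n - b : ℕ) : K))
        = RatFunc.X + 1 + (b : K) - (i : K) := by
      rw [Nat.cast_sub hi, Nat.cast_sub hbn]
      ring
    rw [harg, mul_comm]
  have step34 : ∀ i : ℕ, ffF (RatFunc.X + 1 + (b : K) - (i : K)) b
      = (-1) ^ b * ∑ s ∈ Finset.range (b + 1),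
          (b.choose s : K) * ((i.descFactorial s : K) * ffF (-RatFunc.X - 2) (b - s)) := by
    intro i
    have e4 : ffF (RatFunc.X + 1 + (b : K) - (i : K)) b
        = (-1) ^ b * ffF ((i : K) + (-RatFunc.X - 2)) b := by
      rw [ffF_reflect (RatFunc.X + 1 + (b : K)) ((i : K)) b]
      congr 2
      ring
    rw [e4, ffF_vandermonde ((i : K)) (-RatFunc.X - 2) b]
    congr 1
    exact Finset.sum_congr rfl fun s _ => by rw [ffF_natCast]
  calc (∑ i ∈ Finset.range (n + 1), ∑ j ∈ Finset.range (n + 1 - i),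
      ((n.factorial : K) * ffF (RatFunc.X + 1) (n - i) * ffF (RatFunc.X + 1) (n - j) /
        ((i.factorial : K) * (j.factorial : K) * ((n - i - j).factorial : K) *
          ffF (RatFunc.X + 1) n)) * ffF y i * ffF (b : K) j)
      = ∑ i ∈ Finset.range (n + 1), ∑ s ∈ Finset.range (b + 1),
          ((b.choose s : K) * ffF (-RatFunc.X - 2) (b - s) * ffF (RatFunc.X + 1) (n - b) *
            (-1) ^ b / ffF (RatFunc.X + 1) n) *
          (((n.choose i * i.descFactorial s : ℕ) : K) * (ffF y i * ffF (RatFunc.X + 1) (n - i))) := by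
        refine Finset.sum_congr rfl fun i hi => ?_
        have hi' : i ≤ n := by have := Finset.mem_range.1 hi; omega
        rw [step12 i hi', step34 i]
        simp only [Finset.mul_sum]
        refine Finset.sum_congr rfl fun s _ => ?_
        push_cast
        ring
    _ = ∑ s ∈ Finset.range (b + 1),
          ((b.choose s : K) * ffF (-RatFunc.X - 2) (b - s) * ffF (RatFunc.X + 1) (n - b) *
            (-1) ^ b / ffF (RatFunc.X + 1) n) *
          ((n.descFactorial s : K) * ffF y s * ((a - s).descFactorial (n - s) : K)) := by
        rw [Finset.sum_comm]
        refine Finset.sum_congr rfl fun s hs => ?_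
        rw [← Finset.mul_sum, W_eval n a s (by have := Finset.mem_range.1 hs; omega) han]
    _ = if a = n ∧ b = 0 then (n.factorial : K) else 0 := by
        by_cases hb : b = 0
        · subst hb
          rw [show Finset.range (0 + 1) = {0} from rfl, Finset.sum_singleton]
          simp only [Nat.choose_self, Nat.cast_one, Nat.sub_zero, ffF_zero,
            Nat.descFactorial_zero, mul_one, one_mul, pow_zero]
          rw [div_self (P_ne n), one_mul]
          by_cases ha : a = n
          · subst ha
            simp [Nat.descFactorial_self]
          · rw [Nat.descFactorial_eq_zero_iff_lt.2 (by omega)]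
            simp [ha]
        · have : ∀ s ∈ Finset.range (b + 1), ((b.choose s : K) * ffF (-RatFunc.X - 2) (b - s) *
              ffF (RatFunc.X + 1) (n - b) * (-1) ^ b / ffF (RatFunc.X + 1) n) *
              ((n.descFactorial s : K) * ffF y s * ((a - s).descFactorial (n - s) : K)) = 0 := by
            intro s hs
            have hsb : s ≤ b := by have := Finset.mem_range.1 hs; omega
            rw [show ((a - s).descFactorial (n - s)) = 0 from
              Nat.descFactorial_eq_zero_iff_lt.2 (by omega)]
            simp
          rw [Finset.sum_eq_zero this, if_neg (by tauto)]


/-- the evaluation point -/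
noncomputable def pt (m1 m2 : ℕ) : Fin 2 → K :=
  fun v => if v = 0 then (m1 : K) - RatFunc.X - 1 else (m2 : K)

lemma degsum (m : Fin 2 →₀ ℕ) : (m.sum fun _ e => e) = m 0 + m 1 := by
  rw [Finsupp.sum_fintype _ _ (fun _ => rfl), Fin.sum_univ_two]

lemma finsupp2_ext {m d : Fin 2 →₀ ℕ} (h0 : m 0 = d 0) (h1 : m 1 = d 1) : m = d :=
  Finsupp.ext (Fin.forall_fin_two.2 ⟨h0, h1⟩)

noncomputable def yzero : Fin 2 → Polynomial K :=
  fun v => if v = 0 then Polynomial.X else 0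

lemma natDegree_yzero (g : MvPolynomial (Fin 2) K) :
    (MvPolynomial.aeval yzero g).natDegree ≤ g.totalDegree := by
  conv_lhs => rw [← support_sum_monomial_coeff g]
  rw [map_sum]
  apply Polynomial.natDegree_sum_le_of_forall_le
  intro m hm
  rw [MvPolynomial.aeval_monomial]
  refine le_trans (Polynomial.natDegree_mul_le) (le_trans ?_ (MvPolynomial.le_totalDegree hm))
  rw [degsum]
  have h1 : (algebraMap K (Polynomial K) (coeff m g)).natDegree = 0 := by
    rw [Polynomial.algebraMap_eq]; exact Polynomial.natDegree_C _
  rw [h1, zero_add, Finsupp.prod_fintype _ _ (fun _ => pow_zero _), Fin.prod_univ_two]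
  refine le_trans (Polynomial.natDegree_mul_le) (add_le_add ?_ ?_)
  · rw [show yzero 0 = Polynomial.X from rfl, Polynomial.natDegree_X_pow]
  · rw [show yzero 1 = 0 from rfl]
    rcases Nat.eq_zero_or_pos (m 1) with h | h
    · rw [h, pow_zero, Polynomial.natDegree_one]
    · rw [zero_pow (by omega), Polynomial.natDegree_zero]
      exact Nat.zero_le _

lemma eval_yzero (g : MvPolynomial (Fin 2) K) (t : K) :
    Polynomial.eval t (MvPolynomial.aeval yzero g)
      = MvPolynomial.eval (fun v : Fin 2 => if v = 0 then t else 0) g := by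
  rw [MvPolynomial.aeval_def, ← Polynomial.coe_evalRingHom, MvPolynomial.eval₂_comp_left]
  have h1 : (Polynomial.evalRingHom t).comp (algebraMap K (Polynomial K)) = RingHom.id K := by
    ext x
    simp [Polynomial.algebraMap_eq]
  have h2 : (⇑(Polynomial.evalRingHom t) ∘ yzero)
      = fun v : Fin 2 => if v = 0 then t else 0 := by
    funext v
    by_cases hv : v = 0 <;> simp [yzero, hv]
  rw [h1, h2, MvPolynomial.eval₂_id]

lemma row_coeff_zero (g : MvPolynomial (Fin 2) K) (hq : MvPolynomial.aeval yzero g = 0)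
    (d : Fin 2 →₀ ℕ) (hd : d 1 = 0) : coeff d g = 0 := by
  have expand : MvPolynomial.aeval yzero g = ∑ m ∈ g.support,
      Polynomial.C (coeff m g) * (Polynomial.X ^ (m 0) * (0 : Polynomial K) ^ (m 1)) := by
    conv_lhs => rw [← support_sum_monomial_coeff g]
    rw [map_sum]
    refine Finset.sum_congr rfl fun m hm => ?_
    rw [MvPolynomial.aeval_monomial, Finsupp.prod_fintype _ _ (fun _ => pow_zero _),
      Fin.prod_univ_two, Polynomial.algebraMap_eq]
    rfl
  have hco := congrArg (fun p => Polynomial.coeff p (d 0)) hq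
  simp only [Polynomial.coeff_zero] at hco
  rw [expand, Polynomial.finset_sum_coeff] at hco
  have hterm : ∀ m ∈ g.support,
      (Polynomial.C (coeff m g) * (Polynomial.X ^ (m 0) * (0 : Polynomial K) ^ (m 1))).coeff (d 0)
      = if m = d then coeff m g else 0 := by
    intro m _
    rcases Nat.eq_zero_or_pos (m 1) with h1 | h1
    · rw [h1, pow_zero, mul_one, Polynomial.coeff_C_mul, Polynomial.coeff_X_pow]
      by_cases hmd : m = d
      · subst hmd
        simp
      · have hne : d 0 ≠ m 0 := fun hc => hmd (finsupp2_ext hc.symm (by rw [h1, hd]))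
        simp [hmd, hne]
    · rw [zero_pow (by omega), mul_zero, mul_zero, Polynomial.coeff_zero,
        if_neg (fun hc => by rw [hc, hd] at h1; omega)]
  rw [Finset.sum_congr rfl hterm, Finset.sum_ite_eq' g.support d] at hco
  by_cases hdm : d ∈ g.support
  · rwa [if_pos hdm] at hco
  · exact MvPolynomial.notMem_support_iff.1 hdm

lemma dvd_XX (g : MvPolynomial (Fin 2) K) (h0 : ∀ d ∈ g.support, d 0 ≠ 0)
    (h1 : ∀ d ∈ g.support, d 1 ≠ 0) : (X 0 * X 1 : MvPolynomial (Fin 2) K) ∣ g := by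
  have hdvd : (X 0 * X 1 : MvPolynomial (Fin 2) K) ∣
      ∑ m ∈ g.support, monomial m (coeff m g) := by
    refine Finset.dvd_sum fun m hm => ?_
    refine ⟨monomial (m - Finsupp.single 0 1 - Finsupp.single 1 1) (coeff m g), ?_⟩
    rw [show (MvPolynomial.X 0 : MvPolynomial (Fin 2) K)
        = monomial (Finsupp.single 0 1) 1 from rfl,
      show (MvPolynomial.X 1 : MvPolynomial (Fin 2) K)
        = monomial (Finsupp.single 1 1) 1 from rfl,
      mul_assoc, monomial_mul, monomial_mul, one_mul, one_mul]
    have hexp : Finsupp.single (0 : Fin 2) 1 + (Finsupp.single (1 : Fin 2) 1 +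
        ((m - Finsupp.single 0 1) - Finsupp.single 1 1)) = m := by
      refine finsupp2_ext ?_ ?_
      · have hm0 := h0 m hm
        simp only [Finsupp.add_apply, Finsupp.tsub_apply, Finsupp.single_apply]
        norm_num
        omega
      · have hm1 := h1 m hm
        simp only [Finsupp.add_apply, Finsupp.tsub_apply, Finsupp.single_apply]
        norm_num
        omega
    rw [hexp]
  rwa [support_sum_monomial_coeff] at hdvd

noncomputable def shf : Fin 2 → MvPolynomial (Fin 2) K := fun v => X v + 1

lemma totalDegree_shift (s : MvPolynomial (Fin 2) K) :
    (MvPolynomial.aeval shf s).totalDegree ≤ s.totalDegree := by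
  conv_lhs => rw [← support_sum_monomial_coeff s]
  rw [map_sum]
  refine le_trans (MvPolynomial.totalDegree_finset_sum _ _) (Finset.sup_le fun m hm => ?_)
  rw [MvPolynomial.aeval_monomial]
  refine le_trans (MvPolynomial.totalDegree_mul _ _)
    (le_trans ?_ (MvPolynomial.le_totalDegree hm))
  rw [degsum]
  have h1 : (algebraMap K (MvPolynomial (Fin 2) K) (coeff m s)).totalDegree = 0 := by
    rw [MvPolynomial.algebraMap_eq]; exact MvPolynomial.totalDegree_C _
  rw [h1, zero_add, Finsupp.prod_fintype _ _ (fun _ => pow_zero _), Fin.prod_univ_two]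
  have hb : ∀ v : Fin 2, ∀ k : ℕ, ((shf v) ^ k).totalDegree ≤ k := by
    intro v k
    refine le_trans (MvPolynomial.totalDegree_pow _ _) ?_
    have : (shf v).totalDegree ≤ 1 := by
      refine le_trans (MvPolynomial.totalDegree_add _ _) ?_
      rw [MvPolynomial.totalDegree_X, MvPolynomial.totalDegree_one]
      omega
    calc k * (shf v).totalDegree ≤ k * 1 := Nat.mul_le_mul_left k this
      _ = k := Nat.mul_one k
  exact le_trans (MvPolynomial.totalDegree_mul _ _) (add_le_add (hb 0 (m 0)) (hb 1 (m 1)))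

lemma eval_shift (s : MvPolynomial (Fin 2) K) (p : Fin 2 → K) :
    MvPolynomial.eval p (MvPolynomial.aeval shf s)
      = MvPolynomial.eval (fun v => p v + 1) s := by
  rw [MvPolynomial.aeval_def, MvPolynomial.eval₂_comp_left (MvPolynomial.eval p)]
  have h1 : (MvPolynomial.eval p).comp (algebraMap K (MvPolynomial (Fin 2) K)) = RingHom.id K := by
    ext x
    simp [MvPolynomial.algebraMap_eq]
  have h2 : (⇑(MvPolynomial.eval p) ∘ shf) = fun v => p v + 1 := by
    funext v
    simp [shf]
  rw [h1, h2, MvPolynomial.eval₂_id]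

lemma rename_shift (s : MvPolynomial (Fin 2) K) :
    rename (Equiv.swap (0 : Fin 2) 1) (MvPolynomial.aeval shf s)
      = MvPolynomial.aeval shf (rename (Equiv.swap (0 : Fin 2) 1) s) := by
  have h1 : rename (Equiv.swap (0 : Fin 2) 1) (MvPolynomial.aeval shf s)
      = MvPolynomial.aeval (fun v => rename (Equiv.swap (0 : Fin 2) 1) (shf v)) s :=
    AlgHom.congr_fun (MvPolynomial.comp_aeval shf (rename (Equiv.swap (0 : Fin 2) 1))) s
  rw [h1, MvPolynomial.aeval_rename]
  have h4 : (fun v => rename (Equiv.swap (0 : Fin 2) 1) (shf v))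
      = shf ∘ (Equiv.swap (0 : Fin 2) 1) := by
    funext v
    simp [shf]
  rw [h4]

lemma shift_inj (s : MvPolynomial (Fin 2) K) (h : MvPolynomial.aeval shf s = 0) : s = 0 := by
  have h1 : MvPolynomial.aeval (fun v : Fin 2 => (X v - 1 : MvPolynomial (Fin 2) K))
      (MvPolynomial.aeval shf s) = s := by
    have h2 := AlgHom.congr_fun (MvPolynomial.comp_aeval shf
      (MvPolynomial.aeval (fun v : Fin 2 => (MvPolynomial.X v - 1 : MvPolynomial (Fin 2) K)))) s
    rw [AlgHom.comp_apply] at h2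
    rw [h2]
    have h3 : (fun i : Fin 2 => MvPolynomial.aeval
        (fun v : Fin 2 => (MvPolynomial.X v - 1 : MvPolynomial (Fin 2) K)) (shf i))
        = MvPolynomial.X := by
      funext v
      simp [shf]
    rw [h3, MvPolynomial.aeval_X_left, AlgHom.id_apply]
  rw [h, map_zero] at h1
  exact h1.symm

theorem vanish : ∀ N : ℕ, ∀ g : MvPolynomial (Fin 2) K,
    rename (Equiv.swap (0 : Fin 2) 1) g = g → g.totalDegree ≤ N →
    (∀ m1 m2 : ℕ, m2 ≤ m1 → m1 + m2 ≤ N → MvPolynomial.eval (pt m1 m2) g = 0) → g = 0 := by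
  intro N
  induction N using Nat.strong_induction_on with
  | _ N IH =>
    intro g hsym hdeg hvan
    -- the restriction of g to the line y = 0 is zero
    have hq : MvPolynomial.aeval yzero g = 0 := by
      set q := MvPolynomial.aeval yzero g with hqdef
      by_cases hq0 : q = 0
      · exact hq0
      refine Polynomial.eq_zero_of_degree_lt_of_eval_index_eq_zero
        (Finset.range (N + 1)) (v := fun m : ℕ => (m : K) - RatFunc.X - 1) ?_ ?_ ?_
      · intro x _ y _ hxy
        have : (x : K) = y := by linear_combination hxy
        exact_mod_cast this
      · rw [Finset.card_range, Polynomial.degree_eq_natDegree hq0]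
        exact_mod_cast Nat.lt_succ_of_le (le_trans (natDegree_yzero g) hdeg)
      · intro m hm
        rw [eval_yzero]
        have := hvan m 0 (Nat.zero_le m) (by have := Finset.mem_range.1 hm; omega)
        rw [show (fun v : Fin 2 => if v = 0 then (m : K) - RatFunc.X - 1 else (0 : K)) = pt m 0
          from funext fun v => by by_cases hv : v = 0 <;> simp [pt, hv]]
        exact this
    -- coefficients with zero exponent in either variable vanish
    have hc1 : ∀ d ∈ g.support, d 1 ≠ 0 := by
      intro d hd hcon
      exact (MvPolynomial.mem_support_iff.1 hd) (row_coeff_zero g hq d hcon)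
    have hc0 : ∀ d ∈ g.support, d 0 ≠ 0 := by
      intro d hd hcon
      have key : coeff (d.mapDomain (Equiv.swap (0 : Fin 2) 1)) g = coeff d g := by
        conv_lhs => rw [← hsym]
        exact MvPolynomial.coeff_rename_mapDomain _ (Equiv.swap (0 : Fin 2) 1).injective g d
      have hd1 : (d.mapDomain (Equiv.swap (0 : Fin 2) 1)) 1 = 0 := by
        rw [Finsupp.mapDomain_equiv_apply]
        simpa using hcon
      have := row_coeff_zero g hq _ hd1
      rw [key] at this
      exact (MvPolynomial.mem_support_iff.1 hd) this
    obtain ⟨s, hs⟩ := dvd_XX g hc0 hc1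
    by_cases hN : N < 2
    · -- degree too small: s must be zero
      by_contra hg
      have hsne : s ≠ 0 := fun hc => hg (by rw [hs, hc, mul_zero])
      obtain ⟨m, hm⟩ := (MvPolynomial.support_nonempty.2 hsne)
      have hmem : Finsupp.single (0 : Fin 2) 1 + (Finsupp.single (1 : Fin 2) 1 + m)
          ∈ g.support := by
        rw [hs, mul_assoc, MvPolynomial.support_X_mul, MvPolynomial.support_X_mul]
        exact Finset.mem_map_of_mem _ (Finset.mem_map_of_mem _ hm)
      have hsum := MvPolynomial.le_totalDegree hmem
      rw [degsum] at hsum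
      simp only [Finsupp.add_apply, Finsupp.single_apply] at hsum
      have : (2 : ℕ) ≤ N := by
        have := le_trans hsum hdeg
        norm_num at this
        omega
      omega
    · push_neg at hN
      -- properties of s
      have hXXne : (X 0 * X 1 : MvPolynomial (Fin 2) K) ≠ 0 :=
        mul_ne_zero (MvPolynomial.X_ne_zero 0) (MvPolynomial.X_ne_zero 1)
      have hssym : rename (Equiv.swap (0 : Fin 2) 1) s = s := by
        apply mul_left_cancel₀ hXXne
        have : rename (Equiv.swap (0 : Fin 2) 1) g = X 1 * X 0 *
            rename (Equiv.swap (0 : Fin 2) 1) s := by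
          rw [hs, map_mul, map_mul, MvPolynomial.rename_X, MvPolynomial.rename_X,
            Equiv.swap_apply_left, Equiv.swap_apply_right]
        rw [← hs]
        nth_rewrite 1 [← hsym]
        rw [this]
        ring
      have hsdeg : s.totalDegree ≤ N - 2 := by
        rw [MvPolynomial.totalDegree]
        refine Finset.sup_le fun m hm => ?_
        have hmem : Finsupp.single (0 : Fin 2) 1 + (Finsupp.single (1 : Fin 2) 1 + m)
            ∈ g.support := by
          rw [hs, mul_assoc, MvPolynomial.support_X_mul, MvPolynomial.support_X_mul]
          exact Finset.mem_map_of_mem _ (Finset.mem_map_of_mem _ hm)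
        have hsum := le_trans (MvPolynomial.le_totalDegree hmem) hdeg
        rw [degsum] at hsum
        simp only [Finsupp.add_apply, Finsupp.single_apply] at hsum
        rw [degsum]
        norm_num at hsum
        omega
      have hsvan : ∀ m1 m2 : ℕ, m2 ≤ m1 → m1 + m2 ≤ N - 2 →
          MvPolynomial.eval (pt (m1 + 1) (m2 + 1)) s = 0 := by
        intro m1 m2 h21 hsumle
        have hg0 := hvan (m1 + 1) (m2 + 1) (by omega) (by omega)
        rw [hs, map_mul, map_mul] at hg0
        have e0 : MvPolynomial.eval (pt (m1 + 1) (m2 + 1)) (X 0) = ((m1 + 1 : ℕ) : K) -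
            RatFunc.X - 1 := by simp [pt]
        have e1 : MvPolynomial.eval (pt (m1 + 1) (m2 + 1)) (X 1) = ((m2 + 1 : ℕ) : K) := by
          simp [pt]
        rw [e0, e1] at hg0
        rcases mul_eq_zero.1 hg0 with h | h
        · rcases mul_eq_zero.1 h with h' | h'
          · exact absurd h' (point_ne (m1 + 1))
          · exact absurd h' (Nat.cast_ne_zero.2 (Nat.succ_ne_zero m2))
        · exact h
      -- shift s and recurse
      set s' := MvPolynomial.aeval shf s with hs'
      have hs'sym : rename (Equiv.swap (0 : Fin 2) 1) s' = s' := by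
        rw [hs', rename_shift, hssym]
      have hs'deg : s'.totalDegree ≤ N - 2 := le_trans (totalDegree_shift s) hsdeg
      have hs'van : ∀ m1 m2 : ℕ, m2 ≤ m1 → m1 + m2 ≤ N - 2 →
          MvPolynomial.eval (pt m1 m2) s' = 0 := by
        intro m1 m2 h21 hsumle
        rw [hs', eval_shift]
        have : (fun v => pt m1 m2 v + 1) = pt (m1 + 1) (m2 + 1) := by
          funext v
          by_cases hv : v = 0 <;> simp [pt, hv] <;> push_cast <;> ring
        rw [this]
        exact hsvan m1 m2 h21 hsumle
      have := IH (N - 2) (by omega) s' hs'sym hs'deg hs'van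
      have hs0 : s = 0 := shift_inj s this
      rw [hs, hs0, mul_zero]


lemma ffX_def (v : Fin 2) (n : ℕ) :
    ffX v n = ∏ i ∈ Finset.range n, (X v - C (i : K)) := rfl

lemma eval_ffX (p : Fin 2 → K) (v : Fin 2) (n : ℕ) :
    MvPolynomial.eval p (ffX v n) = ffF (p v) n := by
  rw [ffX_def, ffF_def, map_prod]
  exact Finset.prod_congr rfl fun i _ => by rw [map_sub, eval_X, eval_C]

lemma rename_ffX_zero (n : ℕ) :
    rename (Equiv.swap (0 : Fin 2) 1) (ffX 0 n) = ffX 1 n := by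
  rw [ffX_def, ffX_def, map_prod]
  exact Finset.prod_congr rfl fun i _ => by
    rw [map_sub, rename_X, rename_C, Equiv.swap_apply_left]

lemma rename_ffX_one (n : ℕ) :
    rename (Equiv.swap (0 : Fin 2) 1) (ffX 1 n) = ffX 0 n := by
  rw [ffX_def, ffX_def, map_prod]
  exact Finset.prod_congr rfl fun i _ => by
    rw [map_sub, rename_X, rename_C, Equiv.swap_apply_right]

lemma totalDegree_ffX (v : Fin 2) (n : ℕ) : (ffX v n).totalDegree ≤ n := by
  rw [ffX_def]
  refine le_trans (MvPolynomial.totalDegree_finset_prod _ _) ?_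
  have h1 : ∀ i : ℕ, ((X v - C (i : K)) : MvPolynomial (Fin 2) K).totalDegree ≤ 1 := by
    intro i
    rw [sub_eq_add_neg, ← map_neg]
    refine le_trans (MvPolynomial.totalDegree_add _ _) ?_
    rw [MvPolynomial.totalDegree_X, MvPolynomial.totalDegree_C]
    omega
  refine le_trans (Finset.sum_le_sum fun i _ => h1 i) ?_
  rw [Finset.sum_const, Finset.card_range, smul_eq_mul, mul_one]

section Tri

variable {β : Type*} [AddCommMonoid β]

lemma tri_to_filter (M : ℕ) (f : ℕ → ℕ → β) :
    ∑ i ∈ Finset.range M, ∑ j ∈ Finset.range (M - i), f i j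
      = ∑ p ∈ (Finset.range M ×ˢ Finset.range M).filter (fun p => p.1 + p.2 < M),
          f p.1 p.2 := by
  rw [Finset.sum_filter, Finset.sum_product]
  refine Finset.sum_congr rfl fun i hi => ?_
  have hi' : i < M := Finset.mem_range.1 hi
  rw [show (∑ j ∈ Finset.range M, if i + j < M then f i j else 0)
      = ∑ j ∈ Finset.range (M - i), if i + j < M then f i j else 0 from
    (Finset.sum_subset (Finset.range_subset_range.2 (by omega))
      (fun x _ hx2 => if_neg (by
        have : ¬ x < M - i := fun hc => hx2 (Finset.mem_range.2 hc)
        omega))).symm]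
  exact Finset.sum_congr rfl fun j hj =>
    (if_pos (by have := Finset.mem_range.1 hj; omega)).symm

lemma tri_swap (M : ℕ) (f : ℕ → ℕ → β) :
    ∑ i ∈ Finset.range M, ∑ j ∈ Finset.range (M - i), f i j
      = ∑ i ∈ Finset.range M, ∑ j ∈ Finset.range (M - i), f j i := by
  rw [tri_to_filter M f, tri_to_filter M (fun i j => f j i)]
  refine Finset.sum_nbij' (fun p => (p.2, p.1)) (fun p => (p.2, p.1)) ?_ ?_ ?_ ?_ ?_
  · intro p hp
    simp only [Finset.mem_filter, Finset.mem_product, Finset.mem_range] at hp ⊢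
    omega
  · intro p hp
    simp only [Finset.mem_filter, Finset.mem_product, Finset.mem_range] at hp ⊢
    omega
  · intro p _; rfl
  · intro p _; rfl
  · intro p _; rfl

end Tri

lemma KS_sym (l1 l2 : ℕ) : rename (Equiv.swap (0 : Fin 2) 1) (KS l1 l2) = KS l1 l2 := by
  rw [KS]
  rw [map_sum]
  have h1 : ∀ i ∈ Finset.range (l1 - l2 + 1),
      rename (Equiv.swap (0 : Fin 2) 1) (∑ j ∈ Finset.range (l1 - l2 + 1 - i),
        C (((l1 - l2).factorial : K) * ffF (RatFunc.X + 1) (l1 - l2 - i) *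
            ffF (RatFunc.X + 1) (l1 - l2 - j) /
          ((i.factorial : K) * (j.factorial : K) * ((l1 - l2 - i - j).factorial : K) *
            ffF (RatFunc.X + 1) (l1 - l2))) * ffX 0 (l2 + i) * ffX 1 (l2 + j))
      = ∑ j ∈ Finset.range (l1 - l2 + 1 - i),
        C (((l1 - l2).factorial : K) * ffF (RatFunc.X + 1) (l1 - l2 - i) *
            ffF (RatFunc.X + 1) (l1 - l2 - j) /
          ((i.factorial : K) * (j.factorial : K) * ((l1 - l2 - i - j).factorial : K) *
            ffF (RatFunc.X + 1) (l1 - l2))) * ffX 1 (l2 + i) * ffX 0 (l2 + j) := by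
    intro i _
    rw [map_sum]
    refine Finset.sum_congr rfl fun j _ => ?_
    rw [map_mul, map_mul, rename_C, rename_ffX_zero, rename_ffX_one]
  rw [Finset.sum_congr rfl h1]
  have h2 := tri_swap (l1 - l2 + 1) (fun i j =>
    C (((l1 - l2).factorial : K) * ffF (RatFunc.X + 1) (l1 - l2 - i) *
        ffF (RatFunc.X + 1) (l1 - l2 - j) /
      ((i.factorial : K) * (j.factorial : K) * ((l1 - l2 - i - j).factorial : K) *
        ffF (RatFunc.X + 1) (l1 - l2))) * ffX 1 (l2 + i) * ffX 0 (l2 + j))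
  rw [h2]
  refine Finset.sum_congr rfl fun i _ => Finset.sum_congr rfl fun j _ => ?_
  have harg : l1 - l2 - j - i = l1 - l2 - i - j := by omega
  have hC : (((l1 - l2).factorial : K) * ffF (RatFunc.X + 1) (l1 - l2 - j) *
        ffF (RatFunc.X + 1) (l1 - l2 - i) /
      ((j.factorial : K) * (i.factorial : K) * ((l1 - l2 - j - i).factorial : K) *
        ffF (RatFunc.X + 1) (l1 - l2)))
      = (((l1 - l2).factorial : K) * ffF (RatFunc.X + 1) (l1 - l2 - i) *
        ffF (RatFunc.X + 1) (l1 - l2 - j) /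
      ((i.factorial : K) * (j.factorial : K) * ((l1 - l2 - i - j).factorial : K) *
        ffF (RatFunc.X + 1) (l1 - l2))) := by
    rw [harg]
    ring
  rw [hC]
  ring

lemma KS_deg (l1 l2 : ℕ) (hl : l2 ≤ l1) : (KS l1 l2).totalDegree ≤ l1 + l2 := by
  rw [KS]
  refine le_trans (MvPolynomial.totalDegree_finset_sum _ _) (Finset.sup_le fun i hi => ?_)
  refine le_trans (MvPolynomial.totalDegree_finset_sum _ _) (Finset.sup_le fun j hj => ?_)
  have hi' := Finset.mem_range.1 hi
  have hj' := Finset.mem_range.1 hj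
  refine le_trans (MvPolynomial.totalDegree_mul _ _) ?_
  refine le_trans (add_le_add (le_trans (MvPolynomial.totalDegree_mul _ _)
    (add_le_add (le_of_eq (MvPolynomial.totalDegree_C _)) (totalDegree_ffX _ _)))
    (totalDegree_ffX _ _)) ?_
  omega


lemma KS_eval (l1 l2 : ℕ) (hl : l2 ≤ l1) (m1 m2 : ℕ) (h21 : m2 ≤ m1)
    (hs : m1 + m2 ≤ l1 + l2) :
    MvPolynomial.eval (pt m1 m2) (KS l1 l2) =
      if m1 = l1 ∧ m2 = l2 then
        ((l1 - l2).factorial : K) * (l2.factorial : K) * ffF ((l1 : K) - RatFunc.X - 1) l2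
      else 0 := by
  have hpt0 : pt m1 m2 0 = (m1 : K) - RatFunc.X - 1 := by simp [pt]
  have hpt1 : pt m1 m2 1 = (m2 : K) := by norm_num [pt]
  have expand : MvPolynomial.eval (pt m1 m2) (KS l1 l2)
      = ∑ i ∈ Finset.range (l1 - l2 + 1), ∑ j ∈ Finset.range (l1 - l2 + 1 - i),
        (((l1 - l2).factorial : K) * ffF (RatFunc.X + 1) (l1 - l2 - i) *
            ffF (RatFunc.X + 1) (l1 - l2 - j) /
          ((i.factorial : K) * (j.factorial : K) * ((l1 - l2 - i - j).factorial : K) *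
            ffF (RatFunc.X + 1) (l1 - l2))) *
          ffF ((m1 : K) - RatFunc.X - 1) (l2 + i) * ffF ((m2 : K)) (l2 + j) := by
    rw [KS, map_sum]
    refine Finset.sum_congr rfl fun i _ => ?_
    rw [map_sum]
    refine Finset.sum_congr rfl fun j _ => ?_
    rw [map_mul, map_mul, eval_C, eval_ffX, eval_ffX, hpt0, hpt1]
  rw [expand]
  by_cases hm2 : m2 < l2
  · rw [if_neg (fun hc => by omega)]
    refine Finset.sum_eq_zero fun i _ => Finset.sum_eq_zero fun j _ => ?_
    rw [ffF_natCast, Nat.descFactorial_eq_zero_iff_lt.2 (by omega), Nat.cast_zero, mul_zero]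
  · push_neg at hm2
    set a := m1 - l2 with ha
    set b := m2 - l2 with hb
    have hba : b ≤ a := by omega
    have hab : a + b ≤ l1 - l2 := by omega
    have hxs : ((m1 : K) - RatFunc.X - 1) - (l2 : K) = (a : K) - RatFunc.X - 1 := by
      rw [ha, Nat.cast_sub (by omega)]
      ring
    have hys : ((m2 : K)) - (l2 : K) = (b : K) := by
      rw [hb, Nat.cast_sub (by omega)]
    calc (∑ i ∈ Finset.range (l1 - l2 + 1), ∑ j ∈ Finset.range (l1 - l2 + 1 - i),
        (((l1 - l2).factorial : K) * ffF (RatFunc.X + 1) (l1 - l2 - i) *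
            ffF (RatFunc.X + 1) (l1 - l2 - j) /
          ((i.factorial : K) * (j.factorial : K) * ((l1 - l2 - i - j).factorial : K) *
            ffF (RatFunc.X + 1) (l1 - l2))) *
          ffF ((m1 : K) - RatFunc.X - 1) (l2 + i) * ffF ((m2 : K)) (l2 + j))
        = (ffF ((m1 : K) - RatFunc.X - 1) l2 * ffF ((m2 : K)) l2) *
          ∑ i ∈ Finset.range (l1 - l2 + 1), ∑ j ∈ Finset.range (l1 - l2 + 1 - i),
          (((l1 - l2).factorial : K) * ffF (RatFunc.X + 1) (l1 - l2 - i) *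
              ffF (RatFunc.X + 1) (l1 - l2 - j) /
            ((i.factorial : K) * (j.factorial : K) * ((l1 - l2 - i - j).factorial : K) *
              ffF (RatFunc.X + 1) (l1 - l2))) *
            ffF ((a : K) - RatFunc.X - 1) i * ffF ((b : K)) j := by
          rw [Finset.mul_sum]
          refine Finset.sum_congr rfl fun i _ => ?_
          rw [Finset.mul_sum]
          refine Finset.sum_congr rfl fun j _ => ?_
          rw [ffF_add_eq ((m1 : K) - RatFunc.X - 1) l2 i, ffF_add_eq ((m2 : K)) l2 j,
            hxs, hys]
          ring
      _ = (ffF ((m1 : K) - RatFunc.X - 1) l2 * ffF ((m2 : K)) l2) *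
          (if a = l1 - l2 ∧ b = 0 then ((l1 - l2).factorial : K) else 0) := by
          rw [main_identity (l1 - l2) a b hba hab]
      _ = if m1 = l1 ∧ m2 = l2 then
            ((l1 - l2).factorial : K) * (l2.factorial : K) *
              ffF ((l1 : K) - RatFunc.X - 1) l2
          else 0 := by
          have hiff : (a = l1 - l2 ∧ b = 0) ↔ (m1 = l1 ∧ m2 = l2) := by
            constructor <;> intro h <;> omega
          by_cases hc : m1 = l1 ∧ m2 = l2
          · rw [if_pos (hiff.2 hc), if_pos hc]
            obtain ⟨e1, e2⟩ := hc
            subst e1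
            subst e2
            rw [ffF_natCast, Nat.descFactorial_self]
            ring
          · rw [if_neg (fun hcc => hc (hiff.1 hcc)), if_neg hc, mul_zero]

theorem stmt16 (l1 l2 : ℕ) (hl : l2 ≤ l1)
    (f : MvPolynomial (Fin 2) (RatFunc ℚ))
    (hsym : MvPolynomial.rename (Equiv.swap (0 : Fin 2) 1) f = f)
    (hdeg : f.totalDegree ≤ l1 + l2)
    (hvan : ∀ m1 m2 : ℕ, m2 ≤ m1 → m1 + m2 ≤ l1 + l2 → (m1, m2) ≠ (l1, l2) →
      MvPolynomial.eval
        (fun v : Fin 2 => if v = 0 then (m1 : RatFunc ℚ) - RatFunc.X - 1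
          else (m2 : RatFunc ℚ)) f = 0)
    (hval : MvPolynomial.eval
        (fun v : Fin 2 => if v = 0 then (l1 : RatFunc ℚ) - RatFunc.X - 1
          else (l2 : RatFunc ℚ)) f =
      ((l1 - l2).factorial : RatFunc ℚ) * (l2.factorial : RatFunc ℚ) *
        ffF ((l1 : RatFunc ℚ) - 1 - RatFunc.X) l2) :
    f = KS l1 l2 := by
  set g := f - KS l1 l2 with hg
  have h1 : rename (Equiv.swap (0 : Fin 2) 1) g = g := by
    rw [hg, map_sub, hsym, KS_sym]
  have h2 : g.totalDegree ≤ l1 + l2 := by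
    rw [hg]
    exact le_trans (MvPolynomial.totalDegree_sub f (KS l1 l2))
      (max_le hdeg (KS_deg l1 l2 hl))
  have h3 : ∀ m1 m2 : ℕ, m2 ≤ m1 → m1 + m2 ≤ l1 + l2 →
      MvPolynomial.eval (pt m1 m2) g = 0 := by
    intro m1 m2 h21 hsle
    rw [hg, map_sub]
    by_cases he : m1 = l1 ∧ m2 = l2
    · obtain ⟨e1, e2⟩ := he
      subst e1
      subst e2
      have hf : MvPolynomial.eval (pt m1 m2) f =
          ((m1 - m2).factorial : K) * (m2.factorial : K) *
            ffF ((m1 : K) - 1 - RatFunc.X) m2 := hval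
      rw [hf, KS_eval m1 m2 hl m1 m2 h21 hsle, if_pos ⟨rfl, rfl⟩]
      have : ((m1 : K) - RatFunc.X - 1) = ((m1 : K) - 1 - RatFunc.X) := by ring
      rw [this, sub_self]
    · have hf : MvPolynomial.eval (pt m1 m2) f = 0 :=
        hvan m1 m2 h21 hsle (by simpa [Prod.ext_iff] using he)
      rw [hf, KS_eval l1 l2 hl m1 m2 h21 hsle, if_neg he, sub_zero]
  have hz := vanish (l1 + l2) g h1 h2 h3
  rw [hg] at hz
  exact sub_eq_zero.1 hz
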